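/- arXiv:1608.03398 — 3 statements merged into one kernel-verified Lean document; each statement's English description precedes it below -/
import Mathlib

section
/- Let F be a finite field with Q elements, let S be a nonempty subset of F, let p̄ be a real number, and let w : F → ℝ be a probability distribution on F (w(y) ≥ 0 for all y and Σ_{y∈F} w(y) = 1) such that w(y) ≤ p̄ for every y ∈ F. Then for all functions f : F → F and g : F → F, the winning probability of the deterministic strategy (f, g) in the game CHSH_Q^S(p̄) satisfies (1/|S|) · Σ_{x∈S} Σ_{y∈F} w(y) · 𝟙[f(x) + g(y) = x·y] ≤ p̄ + √(2/|S|). -/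
/-- Upper bound on the classical value of the game `CHSH_Q^S(p̄)`: for a finite field `F`
with `Q` elements, a nonempty subset `S ⊆ F`, a probability distribution `w` on `F` with
`w(y) ≤ p̄` for all `y`, and any deterministic strategy `(f, g)`,
`(1/|S|) · Σ_{x ∈ S} Σ_{y ∈ F} w(y) · 𝟙[f(x) + g(y) = x·y] ≤ p̄ + √(2/|S|)`. -/
theorem chsh_S_value_bound (F : Type*) [Field F] [Fintype F] [DecidableEq F]
    (Q : ℕ) (hQ : Fintype.card F = Q)
    (S : Finset F) (hS : S.Nonempty)
    (pbar : ℝ) (w : F → ℝ) (hw0 : ∀ y, 0 ≤ w y) (hw1 : ∑ y : F, w y = 1)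
    (hwp : ∀ y, w y ≤ pbar) (f g : F → F) :
    (1 / (S.card : ℝ)) *
        ∑ x ∈ S, ∑ y : F, w y * (if f x + g y = x * y then (1 : ℝ) else 0)
      ≤ pbar + Real.sqrt (2 / S.card) := by
  classical
  obtain ⟨x0, hx0⟩ := hS
  have hp0 : 0 ≤ pbar := le_trans (hw0 x0) (hwp x0)
  set s : ℝ := (S.card : ℝ) with hs
  have hspos : (0:ℝ) < s := by
    have h : 0 < S.card := Finset.card_pos.mpr ⟨x0, hx0⟩
    rw [hs]; exact_mod_cast h
  set I : F → F → ℝ := fun x y => if f x + g y = x * y then (1:ℝ) else 0 with hIdef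
  have hI0 : ∀ x y, 0 ≤ I x y := by
    intro x y; simp only [hIdef]; split <;> norm_num
  have hIsq : ∀ x y, I x y * I x y = I x y := by
    intro x y; simp only [hIdef]; split <;> norm_num
  set W : F → ℝ := fun x => ∑ y : F, w y * I x y with hWdef
  have hW0 : ∀ x, 0 ≤ W x := by
    intro x
    exact Finset.sum_nonneg fun y _ => mul_nonneg (hw0 y) (hI0 x y)
  set V : ℝ := ∑ x ∈ S, W x with hVdef
  have hV0 : 0 ≤ V := Finset.sum_nonneg fun x _ => hW0 x
  -- uniqueness: for y ≠ y', at most one x wins both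
  have huniq : ∀ y y', y ≠ y' → (∑ x ∈ S, I x y * I x y') ≤ 1 := by
    intro y y' hyy'
    have heq : ∀ x, I x y * I x y'
        = if (f x + g y = x * y ∧ f x + g y' = x * y') then (1:ℝ) else 0 := by
      intro x
      simp only [hIdef]
      split_ifs with h1 h2 h3 <;> simp_all <;> norm_num
    calc (∑ x ∈ S, I x y * I x y')
        = ∑ x ∈ S, (if (f x + g y = x * y ∧ f x + g y' = x * y') then (1:ℝ) else 0) :=
          Finset.sum_congr rfl fun x _ => heq x
      _ = ((S.filter (fun x => f x + g y = x * y ∧ f x + g y' = x * y')).card : ℝ) := by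
          rw [Finset.sum_boole]
      _ ≤ 1 := by
          have hcard : (S.filter (fun x => f x + g y = x * y ∧ f x + g y' = x * y')).card ≤ 1 := by
            rw [Finset.card_le_one]
            intro a ha b hb
            simp only [Finset.mem_filter] at ha hb
            obtain ⟨-, ha1, ha2⟩ := ha
            obtain ⟨-, hb1, hb2⟩ := hb
            have h1 : a * (y - y') = g y - g y' := by linear_combination ha2 - ha1
            have h2 : b * (y - y') = g y - g y' := by linear_combination hb2 - hb1
            have hne : y - y' ≠ 0 := sub_ne_zero.mpr hyy'
            have := h1.trans h2.symm
            exact mul_right_cancel₀ hne this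
          exact_mod_cast hcard
  -- expand sum of squares
  have expand : ∑ x ∈ S, (W x)^2
      = ∑ y : F, ∑ y' : F, (w y * w y') * (∑ x ∈ S, I x y * I x y') := by
    have h1 : ∀ x, (W x)^2 = ∑ y : F, ∑ y' : F, (w y * w y') * (I x y * I x y') := by
      intro x
      rw [hWdef, sq, Finset.sum_mul_sum]
      exact Finset.sum_congr rfl fun y _ => Finset.sum_congr rfl fun y' _ => by ring
    rw [Finset.sum_congr rfl fun x _ => h1 x, Finset.sum_comm]
    refine Finset.sum_congr rfl fun y _ => ?_
    rw [Finset.sum_comm]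
    exact Finset.sum_congr rfl fun y' _ => by rw [Finset.mul_sum]
  -- V as a sum over y
  have hVy : V = ∑ y : F, w y * (∑ x ∈ S, I x y) := by
    rw [hVdef, Finset.sum_comm]
    exact Finset.sum_congr rfl fun y _ => by rw [Finset.mul_sum]
  -- key bound
  have hkey : ∑ x ∈ S, (W x)^2 ≤ pbar * V + 1 := by
    rw [expand]
    have hbound : ∀ y y', (w y * w y') * (∑ x ∈ S, I x y * I x y')
        ≤ (if y' = y then pbar * (w y * ∑ x ∈ S, I x y) else 0) + w y * w y' := by
      intro y y'
      by_cases h : y' = y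
      · subst h
        simp only [if_pos rfl, eq_self_iff_true, if_true]
        have hsum : ∑ x ∈ S, I x y' * I x y' = ∑ x ∈ S, I x y' :=
          Finset.sum_congr rfl fun x _ => hIsq x y'
        rw [hsum]
        have hIuS : 0 ≤ ∑ x ∈ S, I x y' := Finset.sum_nonneg fun x _ => hI0 x y'
        nlinarith [mul_nonneg (sub_nonneg.mpr (hwp y')) (mul_nonneg (hw0 y') hIuS), mul_nonneg (hw0 y') (hw0 y')]
      · simp only [if_neg h]
        have hle := huniq y y' (fun hh => h hh.symm)
        have hIS0 : 0 ≤ ∑ x ∈ S, I x y * I x y' :=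
          Finset.sum_nonneg fun x _ => mul_nonneg (hI0 x y) (hI0 x y')
        have hww : 0 ≤ w y * w y' := mul_nonneg (hw0 y) (hw0 y')
        nlinarith
    calc ∑ y : F, ∑ y' : F, (w y * w y') * (∑ x ∈ S, I x y * I x y')
        ≤ ∑ y : F, ∑ y' : F, ((if y' = y then pbar * (w y * ∑ x ∈ S, I x y) else 0) + w y * w y') :=
          Finset.sum_le_sum fun y _ => Finset.sum_le_sum fun y' _ => hbound y y'
      _ = pbar * V + 1 := by
          have h2 : ∀ y : F, ∑ y' : F, ((if y' = y then pbar * (w y * ∑ x ∈ S, I x y) else 0) + w y * w y')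
              = pbar * (w y * ∑ x ∈ S, I x y) + w y := by
            intro y
            rw [Finset.sum_add_distrib, Finset.sum_ite_eq' Finset.univ y]
            simp [← Finset.mul_sum, hw1]
          rw [Finset.sum_congr rfl fun y _ => h2 y, Finset.sum_add_distrib, hw1, hVy,
            ← Finset.mul_sum]
  -- Cauchy-Schwarz
  have hCS : V^2 ≤ s * ∑ x ∈ S, (W x)^2 := by
    calc V^2 = (∑ x ∈ S, 1 * W x)^2 := by rw [hVdef]; norm_num
      _ ≤ s * ∑ x ∈ S, (W x)^2 := by
          have h' := Finset.sum_mul_sq_le_sq_mul_sq S (fun _ => (1:ℝ)) W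
          simpa [hs] using h'
  have hVsq : V^2 ≤ s * (pbar * V + 1) := le_trans hCS (mul_le_mul_of_nonneg_left hkey hspos.le)
  -- final algebra
  set r : ℝ := Real.sqrt (2 / s) with hrdef
  have hr2 : r^2 = 2 / s := Real.sq_sqrt (by positivity)
  have hrpos : 0 < r := Real.sqrt_pos.mpr (by positivity)
  clear_value s I W V r
  clear hkey hCS expand hVy huniq hIsq hI0 hW0 hWdef hIdef hVdef hw1 hwp hw0
  have hsr2 : s * r^2 = 2 := by rw [hr2]; field_simp
  have hgoal : V ≤ (pbar + r) * s := by
    by_contra hcon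
    push_neg at hcon
    have hVpos : 0 < V := lt_trans (by positivity) hcon
    have h2 : ((pbar + r) * s) * V < V * V := mul_lt_mul_of_pos_right hcon hVpos
    have h3a : r * s * V < s := by nlinarith [hVsq, h2]
    have h3b : s * (r * V) < s * 1 := by nlinarith [h3a]
    have h3 : r * V < 1 := lt_of_mul_lt_mul_left h3b hspos.le
    have e1 : r * ((pbar + r) * s) < r * V := mul_lt_mul_of_pos_left hcon hrpos
    have e2 : r * ((pbar + r) * s) = r * pbar * s + 2 := by linear_combination hsr2
    have e3 : 0 ≤ r * pbar * s := by positivity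
    linarith
  calc (1 / s) * V = V / s := by ring
    _ ≤ pbar + r := by rw [div_le_iff₀ hspos]; exact hgoal
end

section
/- Let F be a finite field with Q elements. Then for all functions y : F → F and g : {0,1} → F, one has (1/(2Q)) · Σ_{d∈{0,1}} Σ_{b∈F} 𝟙[g(d) = y(b) − d·b] ≤ 1/2 + √(2/Q), where d ∈ {0,1} is viewed as the corresponding element of F in the product d·b. -/
/-- Base case of the security recursion: for a finite field `F` with `Q` elements and any
functions `y : F → F` and `g : {0,1} → F`,
`(1/(2Q)) · Σ_{d ∈ {0,1}} Σ_{b ∈ F} 𝟙[g(d) = y(b) − d·b] ≤ 1/2 + √(2/Q)`. -/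
theorem base_case_bound (F : Type*) [Field F] [Fintype F] [DecidableEq F]
    (Q : ℕ) (hQ : Fintype.card F = Q) (y : F → F) (g : Fin 2 → F) :
    (1 / (2 * (Q : ℝ))) *
        ∑ d : Fin 2, ∑ b : F, (if g d = y b - (d.val : F) * b then (1 : ℝ) else 0)
      ≤ 1 / 2 + Real.sqrt (2 / Q) := by
  have hQ1 : 1 ≤ Q := by
    rw [← hQ]; exact Fintype.card_pos
  set A : Finset F := Finset.univ.filter (fun b => g 0 = y b - (0 : F) * b) with hA
  set B : Finset F := Finset.univ.filter (fun b => g 1 = y b - (1 : F) * b) with hB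
  have hsum : ∑ d : Fin 2, ∑ b : F, (if g d = y b - (d.val : F) * b then (1 : ℝ) else 0)
      = (A.card : ℝ) + B.card := by
    rw [Fin.sum_univ_two]
    simp only [Finset.sum_boole, hA, hB]
    norm_num
  have hinter : (A ∩ B).card ≤ 1 := by
    apply Finset.card_le_one.2
    intro a ha b hb
    simp only [hA, hB, Finset.mem_inter, Finset.mem_filter] at ha hb
    have h1 : a = y a - g 1 := by
      have := ha.2.2; rw [one_mul] at this; linear_combination this
    have h2 : y a = g 0 := by
      have := ha.1.2; rw [zero_mul, sub_zero] at this; linear_combination -this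
    have h3 : b = y b - g 1 := by
      have := hb.2.2; rw [one_mul] at this; linear_combination this
    have h4 : y b = g 0 := by
      have := hb.1.2; rw [zero_mul, sub_zero] at this; linear_combination -this
    rw [h1, h2, h3, h4]
  have hcard : A.card + B.card ≤ Q + 1 := by
    have := Finset.card_union_add_card_inter A B
    have hu : (A ∪ B).card ≤ Q := by
      rw [← hQ]; exact Finset.card_le_univ _
    omega
  have hQR : (0 : ℝ) < Q := by positivity
  have hkey : (1 / (2 * (Q : ℝ))) ≤ Real.sqrt (2 / Q) := by
    have heq : (1 / (2 * (Q : ℝ))) = Real.sqrt ((1 / (2 * (Q : ℝ)))^2) := by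
      rw [Real.sqrt_sq (by positivity)]
    rw [heq]
    apply Real.sqrt_le_sqrt
    rw [div_pow, one_pow, div_le_div_iff₀ (by positivity) hQR]
    have : (1 : ℝ) ≤ Q := by exact_mod_cast hQ1
    nlinarith
  calc (1 / (2 * (Q : ℝ))) *
        ∑ d : Fin 2, ∑ b : F, (if g d = y b - (d.val : F) * b then (1 : ℝ) else 0)
      ≤ (1 / (2 * (Q : ℝ))) * (Q + 1) := by
        rw [hsum]
        apply mul_le_mul_of_nonneg_left _ (by positivity)
        exact_mod_cast hcard
    _ = 1 / 2 + 1 / (2 * (Q : ℝ)) := by field_simp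
    _ ≤ 1 / 2 + Real.sqrt (2 / Q) := by linarith
end

section
/- Let F be a finite field with Q elements, let B and S be nonempty subsets of F, let α : F → F and y : F → F be functions, and set μ := max_{c∈F} |{b ∈ B : α(b) = c}| / |B|. Then for every function g : F → F, one has (1/(|B|·|S|)) · Σ_{b∈B} Σ_{s∈S} 𝟙[g(b) = y(s) − s·α(b)] ≤ μ + √(2/|S|). -/
open Finset

private lemma list_sum_map_add {α : Type*} (l : List α) (f g : α → ℝ) :
    (l.map (fun a => f a + g a)).sum = (l.map f).sum + (l.map g).sum := by
  induction l with
  | nil => simp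
  | cons a t ih => simp [ih]; ring

private lemma list_sum_map_sub {α : Type*} (l : List α) (f g : α → ℝ) :
    (l.map (fun a => f a - g a)).sum = (l.map f).sum - (l.map g).sum := by
  induction l with
  | nil => simp
  | cons a t ih => simp [ih]; ring

private lemma nat_sq_sub (m : ℕ) : m * m - m = m * (m - 1) := by
  cases m with
  | zero => rfl
  | succ k => rw [Nat.succ_sub_one, Nat.mul_succ, Nat.add_sub_cancel]

/-- Pairs of distinct lines with distinct slopes share at most one point of the graph of `y`
over `S`: incidence bound. -/
lemma incidence_bound {F : Type*} [Field F] [Fintype F] [DecidableEq F]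
    (S : Finset F) (y : F → F) (M : F → ℕ) (c : F → F)
    (hM : ∀ a, M a = (S.filter fun s => y s = c a + s * a).card)
    (A : Finset F) :
    2 * ∑ a ∈ A, M a ≤ 2 * S.card + A.card * (A.card - 1) := by
  classical
  set D : F → Finset (F × F) :=
    fun s => ((A.filter fun a => y s = c a + s * a)).offDiag with hD
  have hswap : ∑ a ∈ A, M a = ∑ s ∈ S, (A.filter fun a => y s = c a + s * a).card := by
    calc ∑ a ∈ A, M a = ∑ a ∈ A, ∑ s ∈ S, if y s = c a + s * a then 1 else 0 := by
          refine Finset.sum_congr rfl fun a _ => ?_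
          rw [hM a, Finset.card_filter]
      _ = ∑ s ∈ S, ∑ a ∈ A, if y s = c a + s * a then 1 else 0 := Finset.sum_comm
      _ = ∑ s ∈ S, (A.filter fun a => y s = c a + s * a).card := by
          refine Finset.sum_congr rfl fun s _ => ?_
          rw [Finset.card_filter]
  have hpairs : ∑ s ∈ S, (D s).card ≤ A.offDiag.card := by
    have hdisj : ∀ s ∈ S, ∀ s' ∈ S, s ≠ s' → Disjoint (D s) (D s') := by
      intro s _ s' _ hss
      rw [Finset.disjoint_left]
      rintro ⟨a, a'⟩ hp hp'
      simp only [hD, Finset.mem_offDiag, Finset.mem_filter] at hp hp'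
      obtain ⟨⟨-, h1⟩, ⟨-, h2⟩, hne⟩ := hp
      obtain ⟨⟨-, h3⟩, ⟨-, h4⟩, -⟩ := hp'
      apply hss
      have key : (s - s') * (a - a') = 0 := by
        have e1 : s * a - s * a' = c a' - c a := by
          have := h1.symm.trans h2; ring_nf; ring_nf at this; linear_combination this
        have e2 : s' * a - s' * a' = c a' - c a := by
          have := h3.symm.trans h4; ring_nf; ring_nf at this; linear_combination this
        ring_nf
        linear_combination e1 - e2
      rcases mul_eq_zero.mp key with h | h
      · exact sub_eq_zero.mp h
      · exact absurd (sub_eq_zero.mp h) hne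
    calc ∑ s ∈ S, (D s).card = (S.biUnion D).card := (Finset.card_biUnion hdisj).symm
      _ ≤ A.offDiag.card := by
          apply Finset.card_le_card
          intro p hp
          obtain ⟨s, -, hs⟩ := Finset.mem_biUnion.mp hp
          have : D s ⊆ A.offDiag := by
            apply Finset.offDiag_mono
            exact Finset.filter_subset _ _
          exact this hs
  have hd : ∀ s, (D s).card
      = (A.filter fun a => y s = c a + s * a).card * ((A.filter fun a => y s = c a + s * a).card - 1) := by
    intro s
    rw [hD, Finset.offDiag_card, nat_sq_sub]
  have hAcard : A.offDiag.card ≤ A.card * (A.card - 1) := by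
    rw [Finset.offDiag_card, nat_sq_sub]
  have hm2 : ∀ m : ℕ, 2 * m ≤ 2 + m * (m - 1) := by
    intro m
    rcases m with _ | _ | m
    · omega
    · omega
    · have : (m + 2) * (m + 2 - 1) = (m+2)*(m+1) := rfl
      nlinarith
  calc 2 * ∑ a ∈ A, M a = ∑ s ∈ S, 2 * (A.filter fun a => y s = c a + s * a).card := by
        rw [hswap, Finset.mul_sum]
    _ ≤ ∑ s ∈ S, (2 + (A.filter fun a => y s = c a + s * a).card
          * ((A.filter fun a => y s = c a + s * a).card - 1)) := by
        exact Finset.sum_le_sum fun s _ => hm2 _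
    _ = 2 * S.card + ∑ s ∈ S, (D s).card := by
        rw [Finset.sum_add_distrib]
        simp [hd, two_mul, Finset.sum_const, mul_comm]
    _ ≤ 2 * S.card + A.offDiag.card := by omega
    _ ≤ 2 * S.card + A.card * (A.card - 1) := by omega

/-- Selection of the `j` slopes with largest `M`-value: weight-capping bound. -/
lemma select_bound {F : Type*} [Fintype F] [DecidableEq F]
    (M n : F → ℕ) (N K j : ℕ) (hj : 1 ≤ j) (hjK : j ≤ K)
    (hn : ∀ a, n a ≤ N) (hsum : ∑ a : F, n a ≤ N * K) :
    ∃ A : Finset F, A.card ≤ j ∧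
      (j : ℝ) * ∑ a : F, (n a : ℝ) * (M a : ℝ)
        ≤ (N : ℝ) * (K : ℝ) * ∑ a ∈ A, (M a : ℝ) := by
  classical
  set r : F → F → Prop := fun a b => M b ≤ M a with hr
  letI : DecidableRel r := fun a b => inferInstanceAs (Decidable (M b ≤ M a))
  haveI : Std.Total r := ⟨fun a b => le_total (M b) (M a)⟩
  haveI : IsTrans F r := ⟨fun a b c h1 h2 => le_trans h2 h1⟩
  set L : List F := List.insertionSort r Finset.univ.toList with hL
  have hperm : L.Perm Finset.univ.toList := List.perm_insertionSort r _
  have hsorted : L.Pairwise r := List.pairwise_insertionSort r _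
  have hnodup : L.Nodup := hperm.nodup_iff.mpr (Finset.nodup_toList _)
  have hsum_univ : ∀ f : F → ℝ, ∑ a : F, f a = (L.map f).sum := by
    intro f
    rw [← Finset.sum_map_toList]
    exact ((hperm.map f).sum_eq).symm
  have hsum_univ_nat : ∀ f : F → ℕ, ∑ a : F, f a = (L.map f).sum := by
    intro f
    rw [← Finset.sum_map_toList]
    exact ((hperm.map f).sum_eq).symm
  set tj := L.take j with htj
  set dj := L.drop j with hdj
  have htjnodup : tj.Nodup := (List.take_sublist _ _).nodup hnodup
  refine ⟨tj.toFinset, ?_, ?_⟩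
  · exact (List.toFinset_card_le _).trans (by rw [List.length_take]; exact min_le_left _ _)
  rw [List.sum_toFinset _ htjnodup, hsum_univ]
  -- abbreviations
  set f𝕄 : F → ℝ := fun a => (M a : ℝ) with hf𝕄
  set f𝕗 : F → ℝ := fun a => (n a : ℝ) * (M a : ℝ) with hf𝕗
  have h𝕄nonneg : ∀ (l : List F), 0 ≤ (l.map f𝕄).sum := by
    intro l
    apply List.sum_nonneg
    intro x hx
    obtain ⟨a, -, rfl⟩ := List.mem_map.mp hx
    positivity
  have hpointwise : ∀ (l : List F), (l.map f𝕗).sum ≤ (N : ℝ) * (l.map f𝕄).sum := by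
    intro l
    rw [← List.sum_map_mul_left]
    apply List.sum_le_sum
    intro a _
    have : (n a : ℝ) ≤ (N : ℝ) := Nat.cast_le.mpr (hn a)
    have : (n a : ℝ) * (M a : ℝ) ≤ (N : ℝ) * (M a : ℝ) :=
      mul_le_mul_of_nonneg_right this (by positivity)
    simpa [f𝕗, f𝕄] using this
  by_cases hcase : L.length ≤ j
  · -- everything is in the top-j prefix
    have htjL : tj = L := List.take_of_length_le hcase
    rw [htjL]
    have h1 : (L.map f𝕗).sum ≤ (N : ℝ) * (L.map f𝕄).sum := hpointwise L
    have hjK' : (j : ℝ) ≤ (K : ℝ) := Nat.cast_le.mpr hjK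
    have hN0 : (0:ℝ) ≤ (N:ℝ) := Nat.cast_nonneg N
    have hj0 : (0:ℝ) ≤ (j:ℝ) := Nat.cast_nonneg j
    calc (j : ℝ) * (L.map f𝕗).sum
        ≤ (j : ℝ) * ((N : ℝ) * (L.map f𝕄).sum) := mul_le_mul_of_nonneg_left h1 hj0
      _ ≤ (K : ℝ) * ((N : ℝ) * (L.map f𝕄).sum) :=
          mul_le_mul_of_nonneg_right hjK' (mul_nonneg hN0 (h𝕄nonneg L))
      _ = (N : ℝ) * (K : ℝ) * (L.map f𝕄).sum := by ring
  push_neg at hcase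
  have hlen_tj : tj.length = j := by rw [htj, List.length_take]; omega
  -- minimum of M over the top-j prefix
  have htjne : tj.toFinset.Nonempty := by
    rw [List.toFinset_nonempty_iff]
    intro h
    rw [h] at hlen_tj
    simp at hlen_tj
    omega
  obtain ⟨a₁, ha₁mem, ha₁min⟩ := Finset.exists_min_image tj.toFinset M htjne
  have hcross : ∀ b ∈ dj, M b ≤ M a₁ := by
    have hs : List.Pairwise r (tj ++ dj) := by
      rw [htj, hdj, List.take_append_drop]; exact hsorted
    have := (List.pairwise_append.mp hs).2.2
    intro b hb
    exact this a₁ (List.mem_toFinset.mp ha₁mem) b hb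
  -- the top-K prefix
  set tK := L.take K with htK
  set dK := L.drop K with hdK
  set mid := tK.drop j with hmid
  have htKsplit : tK = tj ++ mid := by
    have h1 : List.take j tK = tj := by
      rw [htK, htj, List.take_take, min_eq_left hjK]
    conv_lhs => rw [← List.take_append_drop j tK]
    rw [h1]
  have hmid_sub_dj : ∀ b ∈ mid, b ∈ dj := by
    intro b hb
    rw [hmid, List.drop_take] at hb
    exact List.take_subset _ _ hb
  have hdK_sub_dj : ∀ b ∈ dK, b ∈ dj := by
    intro b hb
    rw [hdK] at hb
    have : L.drop K = (L.drop j).drop (K - j) := by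
      rw [List.drop_drop]; congr 1; omega
    rw [this] at hb
    exact List.drop_subset _ _ hb
  have hmidlen : mid.length ≤ K - j := by
    rw [hmid, List.length_drop, htK, List.length_take]; omega
  -- Step "seven": j * Σ_{tK} M ≤ K * Σ_{tj} M
  have hstep7 : (j : ℝ) * (tK.map f𝕄).sum ≤ (K : ℝ) * (tj.map f𝕄).sum := by
    have hsplit : (tK.map f𝕄).sum = (tj.map f𝕄).sum + (mid.map f𝕄).sum := by
      rw [htKsplit, List.map_append, List.sum_append]
    have hmidbd : (mid.map f𝕄).sum ≤ (mid.length : ℝ) * (M a₁ : ℝ) := by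
      have := List.sum_le_card_nsmul (mid.map f𝕄) ((M a₁ : ℝ)) ?_
      · simpa [nsmul_eq_mul] using this
      · intro x hx
        obtain ⟨b, hb, rfl⟩ := List.mem_map.mp hx
        exact_mod_cast Nat.cast_le.mpr (hcross b (hmid_sub_dj b hb))
    have hmina : (j : ℝ) * (M a₁ : ℝ) ≤ (tj.map f𝕄).sum := by
      have := List.card_nsmul_le_sum (tj.map f𝕄) ((M a₁ : ℝ)) ?_
      · rw [List.length_map, hlen_tj] at this
        simpa [nsmul_eq_mul] using this
      · intro x hx
        obtain ⟨b, hb, rfl⟩ := List.mem_map.mp hx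
        exact_mod_cast Nat.cast_le.mpr (ha₁min b (List.mem_toFinset.mpr hb))
    have hmidlen' : (mid.length : ℝ) ≤ (K : ℝ) - (j : ℝ) := by
      have : ((K - j : ℕ) : ℝ) = (K : ℝ) - (j : ℝ) := by
        rw [Nat.cast_sub hjK]
      rw [← this]
      exact_mod_cast hmidlen
    have hMa₁0 : (0:ℝ) ≤ (M a₁ : ℝ) := Nat.cast_nonneg _
    have hj0 : (0:ℝ) ≤ (j : ℝ) := Nat.cast_nonneg _
    have hlen0 : (0:ℝ) ≤ (mid.length : ℝ) := Nat.cast_nonneg _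
    have t1 := mul_le_mul_of_nonneg_left hmidbd hj0
    have t2 := mul_le_mul_of_nonneg_left hmina hlen0
    have t3 := mul_le_mul_of_nonneg_right hmidlen'
      (mul_nonneg hj0 hMa₁0)
    have t4 := mul_le_mul_of_nonneg_right
      (show (mid.length : ℝ) ≤ (K:ℝ) - (j:ℝ) from hmidlen') (h𝕄nonneg tj)
    nlinarith [t1, t2, t3, t4, hsplit, h𝕄nonneg tj, h𝕄nonneg mid]
  -- Step "six": Σ_L n·M ≤ N * Σ_{tK} M
  have hstep6 : (L.map f𝕗).sum ≤ (N : ℝ) * (tK.map f𝕄).sum := by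
    by_cases hKlen : L.length ≤ K
    · have : tK = L := List.take_of_length_le hKlen
      rw [this]
      exact hpointwise L
    push_neg at hKlen
    have hlen_tK : tK.length = K := by rw [htK, List.length_take]; omega
    have htKne : tK.toFinset.Nonempty := by
      rw [List.toFinset_nonempty_iff]
      intro h
      rw [h] at hlen_tK
      simp at hlen_tK
      omega
    obtain ⟨a₀, ha₀mem, ha₀min⟩ := Finset.exists_min_image tK.toFinset M htKne
    have hcross0 : ∀ b ∈ dK, M b ≤ M a₀ := by
      have hs : List.Pairwise r (tK ++ dK) := by
        rw [htK, hdK, List.take_append_drop]; exact hsorted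
      have := (List.pairwise_append.mp hs).2.2
      intro b hb
      exact this a₀ (List.mem_toFinset.mp ha₀mem) b hb
    have hLsplit : ∀ f : F → ℝ, (L.map f).sum = (tK.map f).sum + (dK.map f).sum := by
      intro f
      conv_lhs => rw [show L = tK ++ dK from (List.take_append_drop K L).symm]
      rw [List.map_append, List.sum_append]
    set f𝕟 : F → ℝ := fun a => (n a : ℝ) with hf𝕟
    have hdKbd : (dK.map f𝕗).sum ≤ (dK.map f𝕟).sum * (M a₀ : ℝ) := by
      rw [← List.sum_map_mul_right]
      apply List.sum_le_sum
      intro b hb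
      have h1 : (M b : ℝ) ≤ (M a₀ : ℝ) := Nat.cast_le.mpr (hcross0 b hb)
      have h2 : (0:ℝ) ≤ (n b : ℝ) := Nat.cast_nonneg _
      simpa [f𝕗, f𝕟] using mul_le_mul_of_nonneg_left h1 h2
    have htotal : (tK.map f𝕟).sum + (dK.map f𝕟).sum ≤ (N : ℝ) * (K : ℝ) := by
      rw [← hLsplit f𝕟]
      have : ((∑ a : F, n a : ℕ) : ℝ) ≤ (N : ℝ) * (K : ℝ) := by exact_mod_cast hsum
      calc (L.map f𝕟).sum = ((∑ a : F, n a : ℕ) : ℝ) := by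
            rw [hsum_univ_nat (fun a => n a)]
            push_cast
            rw [List.map_map]
            rfl
        _ ≤ (N : ℝ) * (K : ℝ) := this
    -- Σ_{tK}(N - n a) ≥ Σ_{dK} n, all elements of tK have M ≥ M a₀
    have hcap : (dK.map f𝕟).sum * (M a₀ : ℝ)
        ≤ (tK.map fun a => ((N : ℝ) - (n a : ℝ)) * (M a : ℝ)).sum := by
      have h1 : (tK.map fun a => ((N : ℝ) - (n a : ℝ)) * (M a₀ : ℝ)).sum
          ≤ (tK.map fun a => ((N : ℝ) - (n a : ℝ)) * (M a : ℝ)).sum := by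
        apply List.sum_le_sum
        intro a ha
        have hNa : (0:ℝ) ≤ (N : ℝ) - (n a : ℝ) := by
          have : (n a : ℝ) ≤ (N : ℝ) := Nat.cast_le.mpr (hn a)
          linarith
        exact mul_le_mul_of_nonneg_left
          (Nat.cast_le.mpr (ha₀min a (List.mem_toFinset.mpr ha))) hNa
      have h2 : (dK.map f𝕟).sum * (M a₀ : ℝ)
          ≤ (tK.map fun a => ((N : ℝ) - (n a : ℝ))).sum * (M a₀ : ℝ) := by
        apply mul_le_mul_of_nonneg_right _ (Nat.cast_nonneg _)
        have hsub : (tK.map fun a => ((N : ℝ) - (n a : ℝ))).sum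
            = (K : ℝ) * (N : ℝ) - (tK.map f𝕟).sum := by
          rw [list_sum_map_sub tK (fun _ => (N : ℝ)) (fun a => (n a : ℝ))]
          have : (tK.map fun _ => (N : ℝ)).sum = (tK.length : ℝ) * (N : ℝ) := by
            rw [List.map_const', List.sum_replicate, nsmul_eq_mul]
          rw [this, hlen_tK]
        rw [hsub]
        linarith [htotal]
      calc (dK.map f𝕟).sum * (M a₀ : ℝ)
          ≤ (tK.map fun a => ((N : ℝ) - (n a : ℝ))).sum * (M a₀ : ℝ) := h2
        _ = (tK.map fun a => ((N : ℝ) - (n a : ℝ)) * (M a₀ : ℝ)).sum := by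
            rw [List.sum_map_mul_right]
        _ ≤ _ := h1
    have hfinal : (tK.map f𝕗).sum + (tK.map fun a => ((N : ℝ) - (n a : ℝ)) * (M a : ℝ)).sum
        = (N : ℝ) * (tK.map f𝕄).sum := by
      rw [← list_sum_map_add, ← List.sum_map_mul_left]
      congr 1
      apply List.map_congr_left
      intro a _
      simp [f𝕗, f𝕄]
      ring
    rw [hLsplit f𝕗]
    calc (tK.map f𝕗).sum + (dK.map f𝕗).sum
        ≤ (tK.map f𝕗).sum + (dK.map f𝕟).sum * (M a₀ : ℝ) := by linarith [hdKbd]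
      _ ≤ (tK.map f𝕗).sum + (tK.map fun a => ((N : ℝ) - (n a : ℝ)) * (M a : ℝ)).sum := by
          linarith [hcap]
      _ = (N : ℝ) * (tK.map f𝕄).sum := hfinal
  -- combine
  have hN0 : (0:ℝ) ≤ (N:ℝ) := Nat.cast_nonneg _
  have hj0 : (0:ℝ) ≤ (j:ℝ) := Nat.cast_nonneg _
  calc (j : ℝ) * (L.map f𝕗).sum ≤ (j : ℝ) * ((N : ℝ) * (tK.map f𝕄).sum) :=
        mul_le_mul_of_nonneg_left hstep6 hj0
    _ = (N : ℝ) * ((j : ℝ) * (tK.map f𝕄).sum) := by ring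
    _ ≤ (N : ℝ) * ((K : ℝ) * (tj.map f𝕄).sum) := mul_le_mul_of_nonneg_left hstep7 hN0
    _ = (N : ℝ) * (K : ℝ) * (tj.map f𝕄).sum := by ring

set_option maxHeartbeats 1600000 in
/-- Single-round recursion step. -/
theorem recursion_step_bound (F : Type*) [Field F] [Fintype F] [DecidableEq F]
    (Q : ℕ) (hQ : Fintype.card F = Q)
    (B S : Finset F) (hB : B.Nonempty) (hS : S.Nonempty)
    (α y : F → F) (μ : ℝ)
    (hμ : μ = ((Finset.univ.sup fun c : F => (B.filter fun b => α b = c).card : ℕ) : ℝ)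
      / (B.card : ℝ))
    (g : F → F) :
    (1 / ((B.card : ℝ) * (S.card : ℝ))) *
        ∑ b ∈ B, ∑ s ∈ S, (if g b = y s - s * α b then (1 : ℝ) else 0)
      ≤ μ + Real.sqrt (2 / S.card) := by
  classical
  haveI : Nonempty F := ⟨0⟩
  set β := B.card with hβ
  set σ := S.card with hσdef
  set n : F → ℕ := fun a => (B.filter fun b => α b = a).card with hn
  set N : ℕ := Finset.univ.sup n with hNdef
  have hβpos : 0 < β := Finset.card_pos.mpr hB
  have hσpos : 0 < σ := Finset.card_pos.mpr hS
  have hNpos : 0 < N := by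
    obtain ⟨b₀, hb₀⟩ := hB
    have h1 : 0 < n (α b₀) :=
      Finset.card_pos.mpr ⟨b₀, Finset.mem_filter.mpr ⟨hb₀, rfl⟩⟩
    exact lt_of_lt_of_le h1 (Finset.le_sup (Finset.mem_univ _))
  have hNβ : N ≤ β := Finset.sup_le fun a _ => Finset.card_filter_le _ _
  set K : ℕ := β / N + 1 with hK
  have hKpos : 1 ≤ K := Nat.le_add_left 1 _
  have hmulK : N * K = N * (β / N) + N := by rw [hK, Nat.mul_add, Nat.mul_one]
  have hdm := Nat.div_add_mod β N
  have hmodlt : β % N < N := Nat.mod_lt _ hNpos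
  have hsumn : ∑ a : F, n a = β :=
    (Finset.card_eq_sum_card_fiberwise (fun b _ => Finset.mem_univ (α b))).symm
  have hsum_le : ∑ a : F, n a ≤ N * K := by
    rw [hsumn]
    have h1 : N * (β / N) + β % N = β := hdm
    omega
  have hNK1 : N * (K - 1) ≤ β := by
    have : K - 1 = β / N := by omega
    rw [this]
    omega
  have hNK2 : N * K ≤ β + N := by omega
  -- line counts and maxima
  set lc : F → F → ℕ := fun a c => (S.filter fun s => y s = c + s * a).card with hlc
  set Msup : F → ℕ := fun a => Finset.univ.sup (lc a) with hMsup
  have hMattain : ∀ a : F, ∃ c, Msup a = lc a c := by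
    intro a
    obtain ⟨c, -, hc⟩ := Finset.exists_mem_eq_sup Finset.univ Finset.univ_nonempty (lc a)
    exact ⟨c, hc⟩
  choose cmax hcmax using hMattain
  -- rewrite the inner sums
  have hinner : ∀ b, (∑ s ∈ S, if g b = y s - s * α b then (1:ℝ) else 0)
      = ((lc (α b) (g b) : ℕ) : ℝ) := by
    intro b
    have hfeq : (S.filter fun s => g b = y s - s * α b)
        = (S.filter fun s => y s = g b + s * α b) := by
      apply Finset.filter_congr
      intro s _
      constructor
      · intro h; rw [h]; ring
      · intro h; rw [h]; ring
    rw [Finset.sum_boole, hfeq]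
  set Sb : ℝ := ∑ b ∈ B, ∑ s ∈ S, (if g b = y s - s * α b then (1:ℝ) else 0) with hSb
  have hSbnonneg : 0 ≤ Sb := by
    rw [hSb]
    apply Finset.sum_nonneg
    intro b _
    apply Finset.sum_nonneg
    intro s _
    positivity
  have hSb_eq : Sb = ∑ b ∈ B, ((lc (α b) (g b) : ℕ) : ℝ) :=
    Finset.sum_congr rfl fun b _ => hinner b
  have hSb_le_T : Sb ≤ ∑ a : F, (n a : ℝ) * (Msup a : ℝ) := by
    rw [hSb_eq]
    have h1 : ∀ b, (lc (α b) (g b) : ℝ) ≤ (Msup (α b) : ℝ) := by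
      intro b
      exact_mod_cast Nat.cast_le.mpr (Finset.le_sup (f := lc (α b)) (Finset.mem_univ (g b)))
    calc ∑ b ∈ B, ((lc (α b) (g b) : ℕ) : ℝ)
        ≤ ∑ b ∈ B, ((Msup (α b) : ℕ) : ℝ) := Finset.sum_le_sum fun b _ => h1 b
      _ = ∑ a : F, ∑ b ∈ B.filter fun b => α b = a, ((Msup (α b) : ℕ) : ℝ) :=
          (Finset.sum_fiberwise_of_maps_to (fun b _ => Finset.mem_univ (α b)) _).symm
      _ = ∑ a : F, (n a : ℝ) * (Msup a : ℝ) := by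
          refine Finset.sum_congr rfl fun a _ => ?_
          have hcongr : ∑ b ∈ B.filter fun b => α b = a, ((Msup (α b) : ℕ) : ℝ)
              = ∑ b ∈ B.filter fun b => α b = a, ((Msup a : ℕ) : ℝ) := by
            refine Finset.sum_congr rfl fun b hb => ?_
            rw [(Finset.mem_filter.mp hb).2]
          rw [hcongr, Finset.sum_const, nsmul_eq_mul]
  have hSbβσ : Sb ≤ (β : ℝ) * (σ : ℝ) := by
    rw [hSb]
    calc ∑ b ∈ B, ∑ s ∈ S, (if g b = y s - s * α b then (1:ℝ) else 0)
        ≤ ∑ b ∈ B, ∑ s ∈ S, (1:ℝ) := by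
          refine Finset.sum_le_sum fun b _ => Finset.sum_le_sum fun s _ => ?_
          split <;> norm_num
      _ = (β : ℝ) * (σ : ℝ) := by
          simp [Finset.sum_const, nsmul_eq_mul, mul_comm]
          rfl
  -- the master inequality, for any 1 ≤ j ≤ K
  have master : ∀ j : ℕ, 1 ≤ j → j ≤ K →
      2 * (j : ℝ) * Sb ≤ (N : ℝ) * (K : ℝ) * (2 * (σ:ℝ) + (j:ℝ) * ((j:ℝ) - 1)) := by
    intro j hj hjK
    obtain ⟨A, hAcard, hmaster⟩ := select_bound Msup n N K j hj hjK
      (fun a => Finset.le_sup (Finset.mem_univ a)) hsum_le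
    have hinc : 2 * ∑ a ∈ A, Msup a ≤ 2 * σ + A.card * (A.card - 1) :=
      incidence_bound S y Msup cmax hcmax A
    have hinc2 : 2 * ∑ a ∈ A, Msup a ≤ 2 * σ + j * (j - 1) := by
      have : A.card * (A.card - 1) ≤ j * (j - 1) :=
        Nat.mul_le_mul hAcard (by omega)
      omega
    have hincR : 2 * ∑ a ∈ A, ((Msup a : ℕ) : ℝ) ≤ 2 * (σ:ℝ) + (j:ℝ) * ((j:ℝ) - 1) := by
      have h := (Nat.cast_le (α := ℝ)).mpr hinc2
      push_cast [Nat.cast_sub hj] at h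
      linarith [h]
    have hASum : Sb ≤ ∑ a : F, (n a : ℝ) * (Msup a : ℝ) := hSb_le_T
    have h2 : (j : ℝ) * Sb ≤ (N : ℝ) * (K : ℝ) * ∑ a ∈ A, ((Msup a : ℕ) : ℝ) := by
      calc (j : ℝ) * Sb ≤ (j : ℝ) * ∑ a : F, (n a : ℝ) * (Msup a : ℝ) :=
            mul_le_mul_of_nonneg_left hASum (Nat.cast_nonneg j)
        _ ≤ (N : ℝ) * (K : ℝ) * ∑ a ∈ A, ((Msup a : ℕ) : ℝ) := hmaster
    have hNK0 : (0:ℝ) ≤ (N : ℝ) * (K : ℝ) := by positivity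
    nlinarith [h2, hincR, mul_le_mul_of_nonneg_left hincR hNK0]
  -- set up square-root quantities
  have hσR : (1:ℝ) ≤ (σ:ℝ) := by exact_mod_cast hσpos
  have hβR : (1:ℝ) ≤ (β:ℝ) := by exact_mod_cast hβpos
  have hNR : (1:ℝ) ≤ (N:ℝ) := by exact_mod_cast hNpos
  set w : ℝ := Real.sqrt (2 * (σ:ℝ)) with hw
  have hw2 : w ^ 2 = 2 * (σ:ℝ) := Real.sq_sqrt (by positivity)
  have hwpos : 0 < w := Real.sqrt_pos.mpr (by positivity)
  have hε : Real.sqrt (2 / (σ:ℝ)) = 2 / w := by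
    have h1 : (2 / (σ:ℝ)) = (2 / w) ^ 2 := by
      rw [div_pow, hw2]
      field_simp
    rw [h1, Real.sqrt_sq (by positivity)]
  rw [hμ, hε]
  have hgoal_iff : (1 / ((β : ℝ) * (σ : ℝ))) * Sb ≤ (N:ℝ)/(β:ℝ) + 2/w ↔
      Sb ≤ ((N:ℝ)/(β:ℝ) + 2/w) * ((β:ℝ) * (σ:ℝ)) := by
    rw [one_div, inv_mul_le_iff₀ (by positivity), mul_comm]
  have hRHS : ((N:ℝ)/(β:ℝ) + 2/w) * ((β:ℝ) * (σ:ℝ)) = (N:ℝ)*(σ:ℝ) + (β:ℝ)*w := by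
    have hβ0 : (β:ℝ) ≠ 0 := by positivity
    have hw0 : w ≠ 0 := ne_of_gt hwpos
    have e1 : (N:ℝ)/(β:ℝ) * ((β:ℝ)*(σ:ℝ)) = (N:ℝ)*(σ:ℝ) := by
      field_simp
    have e2 : 2/w * ((β:ℝ)*(σ:ℝ)) = (β:ℝ)*w := by
      calc 2/w * ((β:ℝ)*(σ:ℝ)) = (β:ℝ) * (2*(σ:ℝ)) / w := by ring
        _ = (β:ℝ) * w^2 / w := by rw [← hw2]
        _ = (β:ℝ)*w := by
            field_simp
    calc ((N:ℝ)/(β:ℝ) + 2/w) * ((β:ℝ) * (σ:ℝ))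
        = (N:ℝ)/(β:ℝ) * ((β:ℝ)*(σ:ℝ)) + 2/w * ((β:ℝ)*(σ:ℝ)) := by ring
      _ = (N:ℝ)*(σ:ℝ) + (β:ℝ)*w := by rw [e1, e2]
  rw [hgoal_iff, hRHS]
  clear_value β σ n N K lc Msup Sb w
  clear hinner hSb_eq hSb hμ
  -- trivial case: σ ≤ 2
  by_cases hσ2 : (σ:ℝ) ≤ 2
  · have hw4 : w ≤ 2 := by nlinarith [hw2, hσ2, sq_nonneg (w - 2)]
    have hσw : (σ:ℝ) ≤ w := by
      nlinarith [hw2, mul_nonneg (sub_nonneg.mpr hw4) hwpos.le]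
    have h1 : (β:ℝ)*(σ:ℝ) ≤ (β:ℝ)*w := mul_le_mul_of_nonneg_left hσw (by positivity)
    nlinarith [hSbβσ, h1, mul_nonneg (by positivity : (0:ℝ) ≤ (N:ℝ))
      (by positivity : (0:ℝ) ≤ (σ:ℝ))]
  push_neg at hσ2
  have hwσ : w ≤ (σ:ℝ) := by nlinarith [hw2, hwpos]
  set j₀ : ℕ := ⌈w⌉₊ with hj₀
  have hj₀pos : 1 ≤ j₀ := Nat.one_le_iff_ne_zero.mpr (by
    intro h
    have := Nat.ceil_eq_zero.mp h
    linarith)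
  by_cases hKj : K < j₀
  · -- case A : j = K
    have hKw : (K:ℝ) < w := Nat.lt_ceil.mp hKj
    have hm := master K hKpos le_rfl
    have hNK1R : (N:ℝ) * ((K:ℝ) - 1) ≤ (β:ℝ) := by
      have := (Nat.cast_le (α := ℝ)).mpr hNK1
      push_cast [Nat.cast_sub hKpos] at this
      linarith
    have hKR : (1:ℝ) ≤ (K:ℝ) := by exact_mod_cast hKpos
    have hK0 : (0:ℝ) < (K:ℝ) := by linarith
    have e2 : ((K:ℝ)*(K:ℝ))*((N:ℝ)*((K:ℝ)-1)) ≤ ((K:ℝ)*(K:ℝ))*(β:ℝ) :=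
      mul_le_mul_of_nonneg_left hNK1R (by positivity)
    have e3 : ((K:ℝ)*(K:ℝ))*(β:ℝ) ≤ ((K:ℝ)*w)*(β:ℝ) :=
      mul_le_mul_of_nonneg_right (mul_le_mul_of_nonneg_left hKw.le hK0.le)
        (by positivity)
    have h4 : 2*(K:ℝ)*Sb ≤ 2*(K:ℝ)*((N:ℝ)*(σ:ℝ) + (β:ℝ)*w) := by
      nlinarith [hm, e2, e3,
        mul_nonneg (mul_nonneg hK0.le hwpos.le) (by positivity : (0:ℝ) ≤ (β:ℝ))]
    exact le_of_mul_le_mul_left (by linarith [h4]) (by linarith : (0:ℝ) < 2*(K:ℝ))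
  · -- case B : j = j₀
    push_neg at hKj
    have hm := master j₀ hj₀pos hKj
    have hwj : w ≤ (j₀:ℝ) := Nat.le_ceil w
    have hj1 : (j₀:ℝ) - 1 ≤ w := by
      have := Nat.ceil_lt_add_one (le_of_lt hwpos)
      linarith
    have hNKR : (N:ℝ) * (K:ℝ) ≤ (β:ℝ) + (N:ℝ) := by exact_mod_cast hNK2
    have hj₀R : (1:ℝ) ≤ (j₀:ℝ) := by exact_mod_cast hj₀pos
    -- 2σ + j(j-1) ≤ 2 j w , then NK(2jw) ≤ (β+N) 2 j w , then divide by 2j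
    have key : 2*(σ:ℝ) + (j₀:ℝ)*((j₀:ℝ)-1) ≤ 2*(j₀:ℝ)*w := by
      nlinarith [mul_le_mul_of_nonneg_left hj1 (by positivity : (0:ℝ) ≤ (j₀:ℝ)),
        mul_le_mul_of_nonneg_right hwj hwpos.le, hw2]
    have h2 : 2*(j₀:ℝ)*Sb ≤ ((β:ℝ) + (N:ℝ)) * (2*(j₀:ℝ)*w) := by
      calc 2*(j₀:ℝ)*Sb ≤ (N:ℝ)*(K:ℝ) * (2*(σ:ℝ) + (j₀:ℝ)*((j₀:ℝ)-1)) := hm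
        _ ≤ (N:ℝ)*(K:ℝ) * (2*(j₀:ℝ)*w) := by
            apply mul_le_mul_of_nonneg_left key (by positivity)
        _ ≤ ((β:ℝ) + (N:ℝ)) * (2*(j₀:ℝ)*w) := by
            apply mul_le_mul_of_nonneg_right hNKR (by positivity)
    have h3 : Sb ≤ ((β:ℝ) + (N:ℝ)) * w := by
      refine le_of_mul_le_mul_left ?_ (by linarith : (0:ℝ) < 2*(j₀:ℝ))
      calc 2*(j₀:ℝ) * Sb ≤ ((β:ℝ) + (N:ℝ)) * (2*(j₀:ℝ)*w) := h2
        _ = 2*(j₀:ℝ) * (((β:ℝ) + (N:ℝ)) * w) := by ring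
    have h5 : (N:ℝ)*w ≤ (N:ℝ)*(σ:ℝ) := mul_le_mul_of_nonneg_left hwσ (by positivity)
    nlinarith [h3, h5]
end
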